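/- Suppose k ≥ 1 and q > 2k+1. Then dim(Hull(C_{n,k}^q)) = dim(C_{n,k}^q) − 1 = C(n+k, k) − 1. Moreover, a basis for Hull(C_{n,k}^q) is given by the evaluation vectors on P' of all monomials of degree k in x_0, x_1, …, x_n except the monomial x_n^k. -/

import Mathlib

open scoped BigOperators

/-- A vector in `F^(n+1)` is a standard representative if its leftmost nonzero
coordinate equals `1`. -/
def IsStdRep {F : Type*} [Field F] {n : ℕ} (v : Fin (n + 1) → F) : Prop :=
  ∃ i, (∀ j, j < i → v j = 0) ∧ v i = 1

/-- The set of standard affine representatives of the points of projective n-space. -/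
abbrev ProjPts (F : Type*) [Field F] (n : ℕ) : Type _ :=
  {v : Fin (n + 1) → F // IsStdRep v}

noncomputable instance {F : Type*} [Field F] [Fintype F] {n : ℕ} :
    Fintype (ProjPts F n) := Fintype.ofFinite _

/-- Evaluation of a polynomial at the standard representatives, as a linear map. -/
noncomputable def evalOnPts (F : Type*) [Field F] [Fintype F] (n : ℕ) :
    MvPolynomial (Fin (n + 1)) F →ₗ[F] (ProjPts F n → F) where
  toFun f := fun p => MvPolynomial.eval p.1 f
  map_add' f g := by ext p; simp
  map_smul' c f := by ext p; simp [MvPolynomial.smul_eval]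

/-- The projective Reed–Muller code `C_{n,k}^q`: evaluations of homogeneous degree-`k`
polynomials at the standard representatives of the points of `ℙ^n(F)`. -/
noncomputable def PRM (F : Type*) [Field F] [Fintype F] (n k : ℕ) :
    Submodule F (ProjPts F n → F) :=
  Submodule.map (evalOnPts F n) (MvPolynomial.homogeneousSubmodule (Fin (n + 1)) F k)

/-- The dual code with respect to the standard bilinear form. -/
noncomputable def dualCode {F : Type*} [Field F] [Fintype F] {n : ℕ}
    (C : Submodule F (ProjPts F n → F)) : Submodule F (ProjPts F n → F) where
  carrier := {y | ∀ c ∈ C, ∑ p : ProjPts F n, y p * c p = 0}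
  zero_mem' := by intro c hc; simp
  add_mem' := by
    intro a b ha hb c hc
    show ∑ p : ProjPts F n, (a + b) p * c p = 0
    simp only [Pi.add_apply, add_mul, Finset.sum_add_distrib, ha c hc, hb c hc, add_zero]
  smul_mem' := by
    intro r a ha c hc
    show ∑ p : ProjPts F n, (r • a) p * c p = 0
    simp only [Pi.smul_apply, smul_eq_mul, mul_assoc, ← Finset.mul_sum, ha c hc, mul_zero]


section Aux
variable {F : Type*} [Field F] [Fintype F]

/-- The unique standard representative in dimension 0. -/
instance : Unique (ProjPts F 0) where
  default := ⟨fun _ => 1, 0, by omega, rfl⟩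
  uniq := by
    rintro ⟨v, i, hlt, hi⟩
    apply Subtype.ext
    funext j
    have hj : j = 0 := Fin.ext (by omega)
    have hi0 : i = 0 := Fin.ext (by omega)
    subst hj; subst hi0
    exact hi

open scoped Classical in
noncomputable def projPtsEquiv (m : ℕ) :
    ProjPts F (m + 1) ≃ (Fin (m + 1) → F) ⊕ ProjPts F m where
  toFun p :=
    if h : p.1 0 = 1 then Sum.inl (Fin.tail p.1)
    else
      Sum.inr ⟨Fin.tail p.1, by
        obtain ⟨v, i, hlt, hi⟩ := p
        obtain ⟨i, rfl⟩ : ∃ i' : Fin (m + 1), i = i'.succ := by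
          refine ⟨i.pred ?_, ?_⟩
          · rintro rfl; exact h hi
          · simp
        exact ⟨i, fun j hj => hlt j.succ (by simpa using hj), hi⟩⟩
  invFun x :=
    match x with
    | Sum.inl w => ⟨Fin.cons 1 w, 0, by simp, by simp⟩
    | Sum.inr p => ⟨Fin.cons 0 p.1, by
        obtain ⟨i, hlt, hi⟩ := p.2
        refine ⟨i.succ, fun j hj => ?_, by simp [hi]⟩
        rcases Fin.eq_zero_or_eq_succ j with rfl | ⟨j', rfl⟩
        · simp
        · simpa using hlt j' (by simpa using hj)⟩
  left_inv p := by
    obtain ⟨v, hv⟩ := p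
    by_cases h : v 0 = 1 <;> simp only [h, dif_pos, dif_neg, not_false_iff]
    · apply Subtype.ext
      show Fin.cons 1 (Fin.tail v) = v
      rw [← h]
      exact Fin.cons_self_tail v
    · apply Subtype.ext
      have h0 : v 0 = 0 := by
        obtain ⟨i, hlt, hi⟩ := hv
        rcases Fin.eq_zero_or_eq_succ i with rfl | ⟨i', rfl⟩
        · exact absurd hi h
        · exact hlt 0 (by simp)
      show Fin.cons 0 (Fin.tail v) = v
      rw [← h0]
      exact Fin.cons_self_tail v
  right_inv x := by
    match x with
    | Sum.inl w => simp [Fin.tail_cons]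
    | Sum.inr p => simp [Fin.tail_cons]

end Aux

section SumLemma
variable {F : Type*} [Field F] [Fintype F]

lemma projPtsEquiv_symm_inl (m : ℕ) (w : Fin (m + 1) → F) :
    ((projPtsEquiv (F := F) m).symm (Sum.inl w)).1 = Fin.cons 1 w := rfl

lemma projPtsEquiv_symm_inr (m : ℕ) (p : ProjPts F m) :
    ((projPtsEquiv (F := F) m).symm (Sum.inr p)).1 = Fin.cons 0 p.1 := rfl

theorem sum_proj_pow {q : ℕ} (hq : Fintype.card F = q) :
    ∀ (n : ℕ) (d : Fin (n + 1) → ℕ), (∀ i, d i < q - 1) →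
      ∑ p : ProjPts F n, ∏ i, p.1 i ^ d i =
        if ∀ j, j ≠ Fin.last n → d j = 0 then 1 else 0 := by
  intro n
  induction n with
  | zero =>
    intro d _
    have hall : ∀ j : Fin 1, j = Fin.last 0 := fun j => Fin.ext (by omega)
    rw [if_pos (fun j hj => absurd (hall j) hj), Fintype.sum_unique]
    show ∏ i : Fin 1, (fun _ => (1 : F)) i ^ d i = 1
    simp
  | succ m ih =>
    intro d hd
    rw [← Equiv.sum_comp (projPtsEquiv (F := F) m).symm
      (fun p : ProjPts F (m + 1) => ∏ i, p.1 i ^ d i), Fintype.sum_sum_type]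
    have hA : (∑ w : Fin (m + 1) → F,
        ∏ i, ((projPtsEquiv (F := F) m).symm (Sum.inl w)).1 i ^ d i) = 0 := by
      have : ∀ w : Fin (m + 1) → F,
          (∏ i, ((projPtsEquiv (F := F) m).symm (Sum.inl w)).1 i ^ d i) =
            ∏ j : Fin (m + 1), w j ^ d j.succ := by
        intro w
        rw [projPtsEquiv_symm_inl, Fin.prod_univ_succ]
        simp
      rw [Finset.sum_congr rfl fun w _ => this w]
      classical
      have hfub := Finset.sum_prod_piFinset (Finset.univ : Finset F)
        (fun (j : Fin (m + 1)) (x : F) => x ^ d j.succ)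
      rw [← Fintype.piFinset_univ, hfub]
      apply Finset.prod_eq_zero (Finset.mem_univ (0 : Fin (m + 1)))
      have := FiniteField.sum_pow_lt_card_sub_one (K := F) (d (Fin.succ 0)) (by rw [hq]; exact hd _)
      simpa using this
    have hB : (∑ p : ProjPts F m,
        ∏ i, ((projPtsEquiv (F := F) m).symm (Sum.inr p)).1 i ^ d i) =
          (0 : F) ^ d 0 * ∑ p : ProjPts F m, ∏ j : Fin (m + 1), p.1 j ^ d j.succ := by
      rw [Finset.mul_sum]
      refine Finset.sum_congr rfl fun p _ => ?_
      rw [projPtsEquiv_symm_inr, Fin.prod_univ_succ]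
      simp
    rw [hA, hB, zero_add, ih (fun j => d j.succ) (fun j => hd _)]
    by_cases h0 : d 0 = 0
    · by_cases h1 : ∀ j : Fin (m + 1), j ≠ Fin.last m → d j.succ = 0
      · rw [if_pos h1, if_pos, h0, pow_zero, one_mul]
        intro j hj
        rcases Fin.eq_zero_or_eq_succ j with rfl | ⟨j', rfl⟩
        · exact h0
        · refine h1 j' fun hc => hj ?_
          rw [hc, Fin.succ_last]
      · rw [if_neg h1, if_neg, mul_zero]
        intro hc
        apply h1
        intro j hj
        apply hc
        rw [← Fin.succ_last]
        exact fun hs => hj (Fin.succ_injective _ hs)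
    · rw [zero_pow h0, zero_mul,
        if_neg (fun hc => h0 (hc 0 (by simp [Fin.ext_iff])))]
end SumLemma

section Inj
universe u
variable {F : Type u} [Field F] [Fintype F]
open MvPolynomial

theorem eval_zero_of_restrict {N : ℕ} (f : MvPolynomial (Fin N) F)
    (h : ∀ v : Fin N → F, eval v f = 0)
    (hdeg : ∀ i, f.degreeOf i ≤ Fintype.card F - 1) : f = 0 := by
  classical
  let e : Fin N ≃ ULift.{u} (Fin N) := Equiv.ulift.symm
  have h0 : rename (⇑e) f = 0 := by
    apply eq_zero_of_eval_eq_zero (σ := ULift.{u} (Fin N)) (K := F)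
    · intro v; rw [eval_rename]; exact h _
    · rw [mem_restrictDegree_iff_sup]
      intro i
      have h2 : degreeOf i ((rename ⇑e) f) ≤ Fintype.card F - 1 := by
        have hie : i = e (e.symm i) := (e.apply_symm_apply i).symm
        rw [hie, degreeOf_rename_of_injective e.injective]
        exact hdeg _
      rw [degreeOf_def] at h2
      exact h2
  have := rename_injective (R := F) (⇑e) e.injective
  exact this (by rw [h0, map_zero])

lemma degree_eq_sum_univ {N : ℕ} (d : Fin N →₀ ℕ) : d.degree = ∑ i, d i := by
  rw [Finsupp.degree]
  exact Finset.sum_subset (Finset.subset_univ _)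
    (fun i _ hi => Finsupp.notMem_support_iff.mp hi)

lemma homog_support_degree {n k : ℕ} {f : MvPolynomial (Fin (n + 1)) F}
    (hf : f.IsHomogeneous k) {d : Fin (n + 1) →₀ ℕ} (hd : d ∈ f.support) :
    ∑ i, d i = k := by
  rw [← degree_eq_sum_univ]
  by_contra hc
  exact MvPolynomial.mem_support_iff.mp hd (hf.coeff_eq_zero hc)

lemma homog_eval_smul {n k : ℕ} {f : MvPolynomial (Fin (n + 1)) F}
    (hf : f.IsHomogeneous k) (c : F) (v : Fin (n + 1) → F) :
    eval (c • v) f = c ^ k * eval v f := by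
  rw [eval_eq' (c • v) f, eval_eq' v f, Finset.mul_sum]
  refine Finset.sum_congr rfl fun d hd => ?_
  have h1 : ∀ i : Fin (n + 1), (c • v) i ^ d i = c ^ d i * v i ^ d i := by
    intro i; simp [mul_pow]
  rw [Finset.prod_congr rfl fun i _ => h1 i, Finset.prod_mul_distrib,
    Finset.prod_pow_eq_pow_sum, homog_support_degree hf hd]
  ring

lemma evalOnPts_apply {n : ℕ} (f : MvPolynomial (Fin (n + 1)) F) (p : ProjPts F n) :
    evalOnPts F n f p = eval p.1 f := rfl

theorem homog_eval_eq_zero {q k n : ℕ} (hq : Fintype.card F = q) (hk1 : 1 ≤ k) (hkq : k < q)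
    {f : MvPolynomial (Fin (n + 1)) F} (hf : f.IsHomogeneous k)
    (h0 : evalOnPts F n f = 0) : f = 0 := by
  classical
  have hev : ∀ v : Fin (n + 1) → F, eval v f = 0 := by
    have hstd : ∀ p : ProjPts F n, eval p.1 f = 0 := by
      intro p; rw [← evalOnPts_apply, h0]; rfl
    intro v
    by_cases hv : v = 0
    · subst hv
      have := homog_eval_smul hf 0 0
      rw [smul_zero] at this
      rw [this, zero_pow (by omega), zero_mul]
    · obtain ⟨i0, hi0⟩ := Function.ne_iff.mp hv
      have hsne : (Finset.univ.filter (fun i => v i ≠ 0)).Nonempty :=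
        ⟨i0, by simpa using hi0⟩
      set i := (Finset.univ.filter (fun i => v i ≠ 0)).min' hsne with hidef
      have hvi : v i ≠ 0 := by
        have := (Finset.univ.filter (fun i => v i ≠ 0)).min'_mem hsne
        simpa using this
      have hp : IsStdRep ((v i)⁻¹ • v) := by
        refine ⟨i, fun j hj => ?_, by simp [inv_mul_cancel₀ hvi]⟩
        have hvj : v j = 0 := by
          by_contra hc
          have hmem : j ∈ Finset.univ.filter (fun i => v i ≠ 0) := by simpa using hc
          exact absurd (Finset.min'_le _ j hmem) (not_le.mpr hj)
        simp [hvj]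
      have hvc : v = v i • ((v i)⁻¹ • v) := by
        rw [smul_smul, mul_inv_cancel₀ hvi, one_smul]
      rw [hvc, homog_eval_smul hf, hstd ⟨_, hp⟩, mul_zero]
  apply eval_zero_of_restrict f hev
  intro i
  rw [hq]
  rw [degreeOf_le_iff]
  intro d hd
  have h1 : d i ≤ ∑ j, d j := Finset.single_le_sum (fun j _ => Nat.zero_le _) (Finset.mem_univ i)
  have h2 : (∑ j, d j) = k := homog_support_degree hf hd
  omega
end Inj

section Pairing
variable {F : Type*} [Field F] [Fintype F]
open MvPolynomial

theorem sum_proj_eval {q m n : ℕ} (hq : Fintype.card F = q) (hm : m < q - 1)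
    {h : MvPolynomial (Fin (n + 1)) F} (hh : h.IsHomogeneous m) :
    ∑ p : ProjPts F n, eval p.1 h = coeff (Finsupp.single (Fin.last n) m) h := by
  classical
  have hrw : ∀ p : ProjPts F n, eval p.1 h =
      ∑ d ∈ h.support, coeff d h * ∏ i, p.1 i ^ d i := fun p => eval_eq' p.1 h
  rw [Finset.sum_congr rfl fun p _ => hrw p, Finset.sum_comm]
  have hstep : ∀ d ∈ h.support,
      (∑ p : ProjPts F n, coeff d h * ∏ i, p.1 i ^ d i)
        = if d = Finsupp.single (Fin.last n) m then coeff d h else 0 := by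
    intro d hd
    have hsum : (∑ i, d i) = m := homog_support_degree hh hd
    have hdlt : ∀ i, d i < q - 1 := fun i =>
      lt_of_le_of_lt (le_trans (Finset.single_le_sum (fun j _ => Nat.zero_le _)
        (Finset.mem_univ i)) hsum.le) hm
    rw [← Finset.mul_sum, sum_proj_pow hq n (⇑d) hdlt]
    by_cases hc : ∀ j, j ≠ Fin.last n → d j = 0
    · rw [if_pos hc, mul_one, if_pos]
      have hlast : d (Fin.last n) = m := by
        rw [← hsum]
        exact (Fintype.sum_eq_single (Fin.last n) hc).symm
      ext j
      by_cases hj : j = Fin.last n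
      · subst hj; simp [hlast]
      · rw [hc j hj, Finsupp.single_eq_of_ne' (fun hh' => hj hh'.symm)]
    · rw [if_neg hc, mul_zero, if_neg]
      intro he
      apply hc
      intro j hj
      rw [he, Finsupp.single_eq_of_ne' (fun hh' => hj hh'.symm)]
  rw [Finset.sum_congr rfl hstep, Finset.sum_ite_eq' h.support
    (Finsupp.single (Fin.last n) m) (fun d => coeff d h)]
  by_cases hmem : Finsupp.single (Fin.last n) m ∈ h.support
  · rw [if_pos hmem]
  · rw [if_neg hmem, (notMem_support_iff.mp hmem)]

theorem coeff_mul_single_last {n k : ℕ} {f g : MvPolynomial (Fin (n + 1)) F}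
    (hf : f.IsHomogeneous k) (hg : g.IsHomogeneous k) :
    coeff (Finsupp.single (Fin.last n) (2 * k)) (f * g)
      = coeff (Finsupp.single (Fin.last n) k) f * coeff (Finsupp.single (Fin.last n) k) g := by
  classical
  rw [coeff_mul]
  rw [Finset.sum_eq_single (Finsupp.single (Fin.last n) k, Finsupp.single (Fin.last n) k)]
  · intro b hb hne
    rw [Finset.HasAntidiagonal.mem_antidiagonal] at hb
    by_cases h1 : coeff b.1 f = 0
    · rw [h1, zero_mul]
    by_cases h2 : coeff b.2 g = 0
    · rw [h2, mul_zero]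
    exfalso
    have hz : ∀ j, j ≠ Fin.last n → b.1 j = 0 ∧ b.2 j = 0 := by
      intro j hj
      have : b.1 j + b.2 j = 0 := by
        have := DFunLike.congr_fun hb j
        rwa [Finsupp.add_apply, Finsupp.single_eq_of_ne' (fun hh' => hj hh'.symm)] at this
      omega
    have hd1 : (∑ i, b.1 i) = k := by
      by_contra hc
      exact h1 (hf.coeff_eq_zero (by rwa [degree_eq_sum_univ]))
    have hd2 : (∑ i, b.2 i) = k := by
      by_contra hc
      exact h2 (hg.coeff_eq_zero (by rwa [degree_eq_sum_univ]))
    apply hne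
    have e1 : b.1 = Finsupp.single (Fin.last n) k := by
      ext j
      by_cases hj : j = Fin.last n
      · subst hj
        simp only [Finsupp.single_eq_same]
        rw [← hd1]
        exact (Fintype.sum_eq_single (Fin.last n) (fun j hj => (hz j hj).1)).symm
      · rw [(hz j hj).1, Finsupp.single_eq_of_ne' (fun hh' => hj hh'.symm)]
    have e2 : b.2 = Finsupp.single (Fin.last n) k := by
      ext j
      by_cases hj : j = Fin.last n
      · subst hj
        simp only [Finsupp.single_eq_same]
        rw [← hd2]
        exact (Fintype.sum_eq_single (Fin.last n) (fun j hj => (hz j hj).2)).symm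
      · rw [(hz j hj).2, Finsupp.single_eq_of_ne' (fun hh' => hj hh'.symm)]
    exact Prod.ext e1 e2
  · intro hc
    exfalso
    apply hc
    rw [Finset.HasAntidiagonal.mem_antidiagonal, ← Finsupp.single_add, two_mul]

theorem pairing_eq {q n k : ℕ} (hq : Fintype.card F = q) (h2k : 2 * k < q - 1)
    {f g : MvPolynomial (Fin (n + 1)) F}
    (hf : f.IsHomogeneous k) (hg : g.IsHomogeneous k) :
    ∑ p : ProjPts F n, evalOnPts F n f p * evalOnPts F n g p
      = coeff (Finsupp.single (Fin.last n) k) f * coeff (Finsupp.single (Fin.last n) k) g := by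
  have hrw : ∀ p : ProjPts F n, evalOnPts F n f p * evalOnPts F n g p = eval p.1 (f * g) := by
    intro p; rw [evalOnPts_apply, evalOnPts_apply, map_mul]
  rw [Finset.sum_congr rfl fun p _ => hrw p,
    sum_proj_eval hq h2k (by rw [two_mul]; exact hf.mul hg),
    coeff_mul_single_last hf hg]
end Pairing

section Dim
variable {F : Type*} [Field F] [Fintype F]
open MvPolynomial

lemma degree_eq_sum_id {α : Type*} (f : α →₀ ℕ) : f.degree = f.sum fun _ => id := rfl

/-- Degree-`k` finsupps on `Fin (n+1)` biject with `Sym (Fin (n+1)) k`. -/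
noncomputable def degreeSetEquivSym (n k : ℕ) :
    {d : Fin (n + 1) →₀ ℕ // d.degree = k} ≃ Sym (Fin (n + 1)) k := by
  classical
  exact
  { toFun := fun d => ⟨Finsupp.toMultiset d.1, by
      rw [Finsupp.card_toMultiset, ← degree_eq_sum_id]; exact d.2⟩
    invFun := fun m => ⟨Multiset.toFinsupp m.1, by
      have h1 : Multiset.card (Finsupp.toMultiset (Multiset.toFinsupp m.1)) = k := by
        rw [Multiset.toFinsupp_toMultiset]; exact m.2
      rw [Finsupp.card_toMultiset, ← degree_eq_sum_id] at h1
      exact h1⟩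
    left_inv := fun d => Subtype.ext (Finsupp.toMultiset_toFinsupp d.1)
    right_inv := fun m => Subtype.ext (Multiset.toFinsupp_toMultiset m.1) }

lemma card_degreeSet (n k : ℕ) [Fintype {d : Fin (n + 1) →₀ ℕ // d.degree = k}] :
    Fintype.card {d : Fin (n + 1) →₀ ℕ // d.degree = k} = (n + k).choose k := by
  rw [Fintype.card_congr (degreeSetEquivSym n k), Sym.card_sym_eq_choose,
    Fintype.card_fin]
  congr 1
  omega

/-- The homogeneous submodule is the span of the degree-`k` monomials. -/
theorem homog_eq_span (n k : ℕ) :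
    homogeneousSubmodule (Fin (n + 1)) F k =
      Submodule.span F (Set.range fun d : {d : Fin (n + 1) →₀ ℕ // d.degree = k} =>
        monomial d.1 (1 : F)) := by
  apply le_antisymm
  · intro f hf
    have hrepr : f = ∑ d ∈ f.support, (coeff d f) • monomial d (1 : F) := by
      rw [Finset.sum_congr rfl (fun d _ => by
        rw [smul_monomial, smul_eq_mul, mul_one])]
      exact (support_sum_monomial_coeff f).symm
    rw [hrepr]
    apply Submodule.sum_mem
    intro d hd
    apply Submodule.smul_mem
    apply Submodule.subset_span
    have hdd : d.degree = k := by
      rw [degree_eq_sum_univ]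
      exact homog_support_degree ((mem_homogeneousSubmodule k f).mp hf) hd
    exact ⟨⟨d, hdd⟩, rfl⟩
  · rw [Submodule.span_le]
    rintro x ⟨d, rfl⟩
    exact (mem_homogeneousSubmodule k _).mpr (isHomogeneous_monomial _ d.2)

theorem li_monomials (n k : ℕ) :
    LinearIndependent F (fun d : {d : Fin (n + 1) →₀ ℕ // d.degree = k} =>
      monomial d.1 (1 : F)) := by
  have hb := (basisMonomials (Fin (n + 1)) F).linearIndependent
  have : (fun d : {d : Fin (n + 1) →₀ ℕ // d.degree = k} => monomial d.1 (1 : F)) =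
      ⇑(basisMonomials (Fin (n + 1)) F) ∘ Subtype.val := by
    funext d
    rw [Function.comp_apply, coe_basisMonomials]
  rw [this]
  exact hb.comp Subtype.val Subtype.val_injective

theorem finrank_homog (n k : ℕ) :
    Module.finrank F ↥(homogeneousSubmodule (Fin (n + 1)) F k) = (n + k).choose k := by
  classical
  haveI : Fintype {d : Fin (n + 1) →₀ ℕ // d.degree = k} :=
    Fintype.ofEquiv _ (degreeSetEquivSym n k).symm
  rw [homog_eq_span, finrank_span_eq_card (li_monomials n k)]
  exact card_degreeSet n k
end Dim

section Main
variable {F : Type*} [Field F] [Fintype F]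

lemma mem_dualCode {n : ℕ} (C : Submodule F (ProjPts F n → F)) (y : ProjPts F n → F) :
    y ∈ dualCode C ↔ ∀ c ∈ C, ∑ p : ProjPts F n, y p * c p = 0 := Iff.rfl

lemma single_last_coe (n k : ℕ) :
    ⇑(Finsupp.single (Fin.last n) k : Fin (n + 1) →₀ ℕ)
      = fun i => if i = Fin.last n then k else 0 := by
  funext i
  rw [Finsupp.single_apply]
  by_cases h : i = Fin.last n
  · rw [if_pos h.symm, if_pos h]
  · rw [if_neg (fun hh => h hh.symm), if_neg h]

end Main

set_option maxHeartbeats 1000000 in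
set_option synthInstance.maxHeartbeats 200000 in
open MvPolynomial in
theorem stmt16 (q n : ℕ) (F : Type*) [Field F] [Fintype F] [DecidableEq F]
    (hq : Fintype.card F = q) (hn : 1 ≤ n) (k : ℕ) (hk1 : 1 ≤ k) (hkq : 2 * k + 1 < q) :
    (Module.finrank F ↥(PRM F n k ⊓ dualCode (PRM F n k)) : ℤ) =
        (Module.finrank F (PRM F n k) : ℤ) - 1 ∧
    Module.finrank F (PRM F n k) = (n + k).choose k ∧
    LinearIndependent F
      (fun d : {d : Fin (n + 1) → ℕ //
          (∑ i, d i) = k ∧ d ≠ fun i => if i = Fin.last n then k else 0} =>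
        (fun p : ProjPts F n => ∏ i, p.1 i ^ d.1 i)) ∧
    Submodule.span F
      (Set.range (fun d : {d : Fin (n + 1) → ℕ //
          (∑ i, d i) = k ∧ d ≠ fun i => if i = Fin.last n then k else 0} =>
        (fun p : ProjPts F n => ∏ i, p.1 i ^ d.1 i)))
      = PRM F n k ⊓ dualCode (PRM F n k) := by
  classical
  have hk2 : 2 * k < q - 1 := by omega
  have hkq' : k < q := by omega
  set E := evalOnPts F n with hEdef
  set M := homogeneousSubmodule (Fin (n + 1)) F k with hMdef
  set D : Fin (n + 1) →₀ ℕ := Finsupp.single (Fin.last n) k with hDdef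
  have hDdeg : D.degree = k := by
    rw [degree_eq_sum_univ, hDdef,
      Fintype.sum_eq_single (Fin.last n)
        (fun j hj => Finsupp.single_eq_of_ne' (fun h => hj h.symm))]
    exact Finsupp.single_eq_same
  have hmono : monomial D (1 : F) ∈ M :=
    (mem_homogeneousSubmodule _ _).mpr (isHomogeneous_monomial _ hDdeg)
  have key : ∀ f ∈ M, E f = 0 → f = 0 := fun f hf h0 =>
    homog_eval_eq_zero hq hk1 hkq' ((mem_homogeneousSubmodule _ _).mp hf) h0
  set φ : MvPolynomial (Fin (n + 1)) F →ₗ[F] F := lcoeff F D with hφdef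
  set N := M ⊓ LinearMap.ker φ with hNdef
  -- The hull is the image of the coefficient-kernel
  have hull_eq : PRM F n k ⊓ dualCode (PRM F n k) = Submodule.map E N := by
    apply le_antisymm
    · rintro x hx
      rw [Submodule.mem_inf] at hx
      obtain ⟨hx1, hx2⟩ := hx
      obtain ⟨f, hfM, rfl⟩ := hx1
      refine Submodule.mem_map.mpr ⟨f, ?_, rfl⟩
      rw [hNdef, Submodule.mem_inf]
      refine ⟨hfM, ?_⟩
      have h := hx2 (E (monomial D 1)) (Submodule.mem_map.mpr ⟨_, hmono, rfl⟩)
      rw [pairing_eq hq hk2 ((mem_homogeneousSubmodule _ _).mp hfM)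
        ((mem_homogeneousSubmodule _ _).mp hmono), coeff_monomial, if_pos rfl,
        mul_one] at h
      rw [LinearMap.mem_ker, hφdef]
      simpa using h
    · rintro x hx
      obtain ⟨f, hfN, rfl⟩ := Submodule.mem_map.mp hx
      rw [hNdef, Submodule.mem_inf] at hfN
      obtain ⟨hfM, hfk⟩ := hfN
      rw [Submodule.mem_inf]
      refine ⟨Submodule.mem_map.mpr ⟨f, hfM, rfl⟩, ?_⟩
      rw [mem_dualCode]
      rintro c hc
      obtain ⟨g, hgM, rfl⟩ := Submodule.mem_map.mp hc
      rw [pairing_eq hq hk2 ((mem_homogeneousSubmodule _ _).mp hfM)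
        ((mem_homogeneousSubmodule _ _).mp hgM)]
      have hc0 : coeff D f = 0 := by
        rw [LinearMap.mem_ker, hφdef] at hfk
        simpa using hfk
      rw [hc0, zero_mul]
  -- finite dimensionality and injectivity
  haveI : Finite {d : Fin (n + 1) →₀ ℕ // d.degree = k} :=
    Finite.of_equiv _ (degreeSetEquivSym n k).symm
  haveI : FiniteDimensional F M := by
    rw [hMdef, homog_eq_span]
    exact FiniteDimensional.span_of_finite F (Set.finite_range _)
  have hNle : N ≤ M := inf_le_left
  haveI : FiniteDimensional F N := Submodule.finiteDimensional_of_le hNle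
  have hEMinj : Function.Injective (E.comp M.subtype) := by
    rw [← LinearMap.ker_eq_bot, Submodule.eq_bot_iff]
    rintro ⟨f, hf⟩ hker
    rw [LinearMap.mem_ker] at hker
    exact Subtype.ext (key f hf hker)
  have hENinj : Function.Injective (E.comp N.subtype) := by
    rw [← LinearMap.ker_eq_bot, Submodule.eq_bot_iff]
    rintro ⟨f, hf⟩ hker
    rw [LinearMap.mem_ker] at hker
    exact Subtype.ext (key f (hNle hf) hker)
  have hrangeM : LinearMap.range (E.comp M.subtype) = PRM F n k := by
    rw [LinearMap.range_comp, Submodule.range_subtype]; rfl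
  have hrangeN : LinearMap.range (E.comp N.subtype) = Submodule.map E N := by
    rw [LinearMap.range_comp, Submodule.range_subtype]
  have hfrM : Module.finrank F (PRM F n k) = Module.finrank F M := by
    rw [← hrangeM, LinearMap.finrank_range_of_inj hEMinj]
  have hfrHull : Module.finrank F ↥(PRM F n k ⊓ dualCode (PRM F n k))
      = Module.finrank F N := by
    rw [hull_eq, ← hrangeN, LinearMap.finrank_range_of_inj hENinj]
  -- rank-nullity for the coefficient functional on M
  have hφrank : Module.finrank F M = 1 + Module.finrank F N := by
    have hrn := LinearMap.finrank_range_add_finrank_ker (φ.domRestrict M)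
    have hker : LinearMap.ker (φ.domRestrict M) = Submodule.comap M.subtype N := by
      rw [LinearMap.ker_domRestrict, hNdef, Submodule.comap_inf,
        Submodule.comap_subtype_self, top_inf_eq]
    have hrange : LinearMap.range (φ.domRestrict M) = ⊤ := by
      rw [LinearMap.range_eq_top]
      intro c
      refine ⟨c • ⟨monomial D 1, hmono⟩, ?_⟩
      rw [map_smul, LinearMap.domRestrict_apply, hφdef]
      simp [coeff_monomial]
    rw [hker, hrange, finrank_top, Module.finrank_self,
      LinearEquiv.finrank_eq (Submodule.comapSubtypeEquivOfLe hNle)] at hrn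
    exact hrn.symm
  have hfrMval : Module.finrank F M = (n + k).choose k := finrank_homog n k
  -- the indexed family of monomials
  set T := {d : Fin (n + 1) → ℕ //
      (∑ i, d i) = k ∧ d ≠ fun i => if i = Fin.last n then k else 0} with hTdef
  set ι : T → {d : Fin (n + 1) →₀ ℕ // d.degree = k} :=
    fun t => ⟨Finsupp.equivFunOnFinite.symm t.1, by
      rw [degree_eq_sum_univ]
      have hco : ⇑(Finsupp.equivFunOnFinite.symm t.1) = t.1 :=
        Finsupp.equivFunOnFinite.apply_symm_apply t.1
      rw [hco]
      exact t.2.1⟩ with hιdef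
  have hcoe : ∀ t : T, ⇑((ι t).1) = t.1 := fun t =>
    Finsupp.equivFunOnFinite.apply_symm_apply t.1
  have hιinj : Function.Injective ι := by
    intro a b hab
    apply Subtype.ext
    rw [← hcoe a, ← hcoe b, hab]
  have hfam : ∀ t : T, (fun p : ProjPts F n => ∏ i, p.1 i ^ t.1 i)
      = E (monomial ((ι t).1) (1 : F)) := by
    intro t
    funext p
    rw [evalOnPts_apply, eval_monomial, one_mul, Finsupp.prod_pow]
    exact Finset.prod_congr rfl fun i _ => by rw [hcoe t]
  have hTmemM : ∀ t : T, monomial ((ι t).1) (1 : F) ∈ M := fun t =>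
    (mem_homogeneousSubmodule _ _).mpr (isHomogeneous_monomial _ (ι t).2)
  have hTne : ∀ t : T, (ι t).1 ≠ D := by
    intro t ht
    apply t.2.2
    rw [← hcoe t, ht, hDdef]
    exact single_last_coe n k
  have hTmemN : ∀ t : T, monomial ((ι t).1) (1 : F) ∈ N := by
    intro t
    rw [hNdef, Submodule.mem_inf]
    refine ⟨hTmemM t, ?_⟩
    rw [LinearMap.mem_ker, hφdef]
    show coeff D (monomial ((ι t).1) (1 : F)) = 0
    rw [coeff_monomial, if_neg (hTne t)]
  -- linear independence
  have hliT : LinearIndependent F (fun t : T => monomial ((ι t).1) (1 : F)) := by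
    have := (li_monomials (F := F) n k).comp ι hιinj
    exact this
  have hspanle : Submodule.span F
      (Set.range fun t : T => monomial ((ι t).1) (1 : F)) ≤ M := by
    rw [Submodule.span_le]
    rintro x ⟨t, rfl⟩
    exact hTmemM t
  have hdisj : Disjoint (Submodule.span F
      (Set.range fun t : T => monomial ((ι t).1) (1 : F))) (LinearMap.ker E) := by
    rw [Submodule.disjoint_def]
    intro x hx hker
    exact key x (hspanle hx) (LinearMap.mem_ker.mp hker)
  have hliE : LinearIndependent F
      (fun t : T => (fun p : ProjPts F n => ∏ i, p.1 i ^ t.1 i)) := by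
    have h2 := hliT.map (f := E) hdisj
    have : (⇑E ∘ fun t : T => monomial ((ι t).1) (1 : F))
        = fun t : T => (fun p : ProjPts F n => ∏ i, p.1 i ^ t.1 i) := by
      funext t
      rw [Function.comp_apply, ← hfam t]
    rwa [this] at h2
  -- span
  have hspanN : Submodule.span F
      (Set.range fun t : T => monomial ((ι t).1) (1 : F)) = N := by
    apply le_antisymm
    · rw [Submodule.span_le]
      rintro x ⟨t, rfl⟩
      exact hTmemN t
    · intro f hf
      rw [hNdef, Submodule.mem_inf] at hf
      obtain ⟨hfM, hfk⟩ := hf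
      have hrepr : f = ∑ d ∈ f.support, (coeff d f) • monomial d (1 : F) := by
        rw [Finset.sum_congr rfl (fun d _ => by rw [smul_monomial, smul_eq_mul, mul_one])]
        exact (support_sum_monomial_coeff f).symm
      rw [hrepr]
      apply Submodule.sum_mem
      intro d hd
      apply Submodule.smul_mem
      apply Submodule.subset_span
      have hdd : (∑ i, d i) = k :=
        homog_support_degree ((mem_homogeneousSubmodule _ _).mp hfM) hd
      have hdne : d ≠ D := by
        rintro rfl
        rw [LinearMap.mem_ker, hφdef] at hfk
        have : coeff D f = 0 := by simpa using hfk
        exact (mem_support_iff.mp hd) this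
      have hdfun : (⇑d : Fin (n + 1) → ℕ) ≠ fun i => if i = Fin.last n then k else 0 := by
        intro hc
        exact hdne (Finsupp.ext fun j =>
          (congrFun hc j).trans (congrFun (single_last_coe n k) j).symm)
      refine ⟨⟨⇑d, hdd, hdfun⟩, ?_⟩
      exact congrArg (fun e => monomial e (1 : F)) (Finsupp.equivFunOnFinite_symm_coe d)
  have hspanE : Submodule.span F
      (Set.range (fun t : T => (fun p : ProjPts F n => ∏ i, p.1 i ^ t.1 i)))
      = PRM F n k ⊓ dualCode (PRM F n k) := by
    have h1 : (fun t : T => (fun p : ProjPts F n => ∏ i, p.1 i ^ t.1 i))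
        = ⇑E ∘ (fun t : T => monomial ((ι t).1) (1 : F)) := by
      funext t
      rw [Function.comp_apply, ← hfam t]
    rw [h1, Set.range_comp, ← Submodule.map_span, hspanN, ← hull_eq]
  refine ⟨?_, by rw [hfrM, hfrMval], hliE, hspanE⟩
  rw [hfrHull, hfrM, hφrank]
  push_cast
  ring
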